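/- Let T be a lexicographically ordered ω₁-tree and let U be a downward-closed subtree of T of height ω₁. Then the set of cofinal branches of U that are local end points of U has cardinality at most ℵ₁. (In fact, the map sending each local right end point to a witnessing element t is one-to-one into T, and likewise for local left end points.) -/

import Mathlib

noncomputable section

open Cardinal Set

def omega1 : Ordinal := (Cardinal.aleph 1).ord

def omega2 : Ordinal := (Cardinal.aleph 2).ord

/-- The height of an element `t`: the order type of its set of strict predecessors. -/
def htOf {X : Type} (lt : X → X → Prop)
    (wo : ∀ t : X, IsWellOrder {s : X // lt s t} fun a b => lt a.1 b.1) (t : X) : Ordinal :=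
  @Ordinal.type {s : X // lt s t} (fun a b => lt a.1 b.1) (wo t)

/-- A lexicographically ordered (normal) `ω₁`-tree. -/
structure LexOmega1Tree where
  T : Type
  lt : T → T → Prop
  lt_irrefl : ∀ a : T, ¬ lt a a
  lt_trans : ∀ {a b c : T}, lt a b → lt b c → lt a c
  /-- the strict predecessors of any element are well-ordered -/
  predWO : ∀ t : T, IsWellOrder {s : T // lt s t} fun a b => lt a.1 b.1
  /-- every level is countable -/
  level_countable : ∀ α : Ordinal, {t : T | htOf lt predWO t = α}.Countable
  /-- levels are nonempty exactly below `ω₁` -/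
  level_nonempty : ∀ α : Ordinal, (∃ t : T, htOf lt predWO t = α) ↔ α < omega1
  /-- normality: distinct elements of the same limit height have different predecessors -/
  normal : ∀ s t : T, htOf lt predWO s = htOf lt predWO t →
    Order.IsSuccLimit (htOf lt predWO s) → (∀ u : T, lt u s ↔ lt u t) → s = t
  /-- the lexicographic comparison of distinct elements of equal height -/
  lexlt : T → T → Prop
  lexlt_same : ∀ a b : T, lexlt a b → htOf lt predWO a = htOf lt predWO b ∧ a ≠ b
  lexlt_tricho : ∀ a b : T, htOf lt predWO a = htOf lt predWO b → a ≠ b →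
    lexlt a b ∨ lexlt b a
  lexlt_asymm : ∀ a b : T, lexlt a b → ¬ lexlt b a
  lexlt_trans : ∀ {a b c : T}, lexlt a b → lexlt b c → lexlt a c
  /-- coherence: the lexicographic comparison is decided at the splitting level -/
  lexlt_coh : ∀ a b a' b' : T, lexlt a b → lt a a' → lt b b' →
    htOf lt predWO a' = htOf lt predWO b' → lexlt a' b'

namespace LexOmega1Tree

variable (S : LexOmega1Tree)

def ht : S.T → Ordinal := htOf S.lt S.predWO

def le (a b : S.T) : Prop := S.lt a b ∨ a = b

/-- a cofinal branch : a downward closed chain meeting every level -/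
def IsBranch (b : Set S.T) : Prop :=
  (∀ s t : S.T, t ∈ b → S.lt s t → s ∈ b) ∧
  (∀ s t : S.T, s ∈ b → t ∈ b → s = t ∨ S.lt s t ∨ S.lt t s) ∧
  (∀ α : Ordinal, α < omega1 → ∃ t ∈ b, S.ht t = α)

/-- the set `𝓑(T)` of cofinal branches -/
def Branch : Type := {b : Set S.T // S.IsBranch b}

/-- the lexicographic order on branches (and on arbitrary sets of nodes) -/
def blex (A B : Set S.T) : Prop := ∃ a ∈ A, ∃ b ∈ B, S.lexlt a b

/-- the order topology on `(𝓑(T), <lex)`, generated by the open rays -/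
def branchTop : TopologicalSpace S.Branch :=
  TopologicalSpace.generateFrom
    {s : Set S.Branch | ∃ a : S.Branch, s = {x | S.blex a.1 x.1} ∨ s = {x | S.blex x.1 a.1}}

/-- `b` is a local right end point of the downward closed subtree `W` -/
def IsLocalRightEP (W b : Set S.T) : Prop :=
  ∃ t ∈ b, ∀ s ∈ b, S.ht t ≤ S.ht s →
    ∀ u ∈ W, S.ht u = S.ht s → S.le t u → u = s ∨ S.lexlt u s

/-- `b` is a local left end point of the downward closed subtree `W` -/
def IsLocalLeftEP (W b : Set S.T) : Prop :=
  ∃ t ∈ b, ∀ s ∈ b, S.ht t ≤ S.ht s →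
    ∀ u ∈ W, S.ht u = S.ht s → S.le t u → u = s ∨ S.lexlt s u

def IsLocalEP (W b : Set S.T) : Prop := S.IsLocalRightEP W b ∨ S.IsLocalLeftEP W b

end LexOmega1Tree


namespace LexOmega1Tree

variable (S : LexOmega1Tree)

instance instPredWO (t : S.T) : IsWellOrder {s : S.T // S.lt s t} fun a b => S.lt a.1 b.1 :=
  S.predWO t

lemma ht_lt_ht {a b : S.T} (h : S.lt a b) : S.ht a < S.ht b := by
  have iso : (fun x y : {s : S.T // S.lt s a} => S.lt x.1 y.1) ≃r
      (Subrel (fun x y : {s : S.T // S.lt s b} => S.lt x.1 y.1)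
        {y : {s : S.T // S.lt s b} | S.lt y.1 a}) :=
    RelIso.mk (Equiv.mk
      (fun u => ⟨⟨u.1, S.lt_trans u.2 h⟩, u.2⟩)
      (fun u => ⟨u.1.1, u.2⟩) (fun u => rfl) (fun u => rfl)) Iff.rfl
  have e : S.ht a =
      Ordinal.typein (fun x y : {s : S.T // S.lt s b} => S.lt x.1 y.1) ⟨a, h⟩ := by
    rw [← Ordinal.type_subrel]
    haveI : IsWellOrder _ (Subrel (fun x y : {s : S.T // S.lt s b} => S.lt x.1 y.1)
        {y : {s : S.T // S.lt s b} | S.lt y.1 a}) :=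
      inferInstanceAs (IsWellOrder _ (Subrel (fun x y : {s : S.T // S.lt s b} => S.lt x.1 y.1)
        (fun y : {s : S.T // S.lt s b} => S.lt y.1 a)))
    exact iso.ordinal_type_eq
  calc S.ht a = _ := e
    _ < _ := Ordinal.typein_lt_type (fun x y : {s : S.T // S.lt s b} => S.lt x.1 y.1) ⟨a, h⟩

lemma ht_lt_omega1 (t : S.T) : S.ht t < omega1 :=
  (S.level_nonempty (S.ht t)).1 ⟨t, rfl⟩

lemma branch_le {b : Set S.T} (hb : S.IsBranch b) {x s : S.T} (hx : x ∈ b) (hs : s ∈ b)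
    (h : S.ht x ≤ S.ht s) : S.le x s := by
  rcases hb.2.1 x s hx hs with h1 | h1 | h1
  · exact Or.inr h1
  · exact Or.inl h1
  · exact absurd (S.ht_lt_ht h1) (not_lt.2 h)

lemma mk_T_le : #S.T ≤ Cardinal.aleph 1 := by
  classical
  haveI : IsWellOrder omega1.{0}.ToType (· < ·) := isWellOrder_lt
  let lvl : omega1.{0}.ToType → Set S.T :=
    fun i => {t : S.T | S.ht t = Ordinal.typein (α := omega1.{0}.ToType) (· < ·) i}
  have hcover : (Set.univ : Set S.T) ⊆ ⋃ i, lvl i := by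
    intro t _
    have h1 : S.ht t < Ordinal.type (α := omega1.{0}.ToType) (· < ·) := by
      rw [Ordinal.type_toType]; exact S.ht_lt_omega1 t
    obtain ⟨i, hi⟩ := Ordinal.typein_surj _ h1
    exact Set.mem_iUnion.2 ⟨i, hi.symm⟩
  have h2 : #S.T = #(Set.univ : Set S.T) := (Cardinal.mk_univ (α := S.T)).symm
  rw [h2]
  calc #(Set.univ : Set S.T) ≤ #(⋃ i, lvl i) := Cardinal.mk_le_mk_of_subset hcover
    _ ≤ #omega1.{0}.ToType * ⨆ i, #(lvl i) := Cardinal.mk_iUnion_le _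
    _ ≤ Cardinal.aleph 1 * Cardinal.aleph0 := by
        apply mul_le_mul'
        · rw [Cardinal.mk_toType]
          exact le_of_eq (Cardinal.card_ord _)
        · exact ciSup_le' fun i => (S.level_countable _).le_aleph0
    _ = Cardinal.aleph 1 := by
        rw [Cardinal.mul_eq_max (Cardinal.aleph0_le_aleph 1) le_rfl]
        simp [Cardinal.aleph0_le_aleph]

/-- two branches of `U` with a common witness for being (same-sided) local end points
are equal. -/
lemma ep_unique {U : Set S.T} (R : S.T → S.T → Prop)
    (hasymm : ∀ a b, R a b → ¬ R b a)
    {b b' : Set S.T} (hb : S.IsBranch b) (hb' : S.IsBranch b')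
    (hbU : b ⊆ U) (hb'U : b' ⊆ U) {t : S.T} (htb : t ∈ b) (htb' : t ∈ b')
    (hw : ∀ s ∈ b, S.ht t ≤ S.ht s → ∀ u ∈ U, S.ht u = S.ht s → S.le t u → u = s ∨ R u s)
    (hw' : ∀ s ∈ b', S.ht t ≤ S.ht s → ∀ u ∈ U, S.ht u = S.ht s → S.le t u → u = s ∨ R u s) :
    b = b' := by
  by_contra hne
  have hx : ∃ x : S.T, (x ∈ b ∧ x ∉ b') ∨ (x ∈ b' ∧ x ∉ b) := by
    by_contra hc
    push_neg at hc
    exact hne (Set.ext fun x => ⟨(hc x).1, (hc x).2⟩)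
  obtain ⟨x, hx⟩ := hx
  set α : Ordinal := max (S.ht x) (S.ht t) with hα
  have hαlt : α < omega1 := max_lt (S.ht_lt_omega1 x) (S.ht_lt_omega1 t)
  obtain ⟨s, hsb, hsht⟩ := hb.2.2 α hαlt
  obtain ⟨s', hs'b, hs'ht⟩ := hb'.2.2 α hαlt
  have htles : S.ht t ≤ S.ht s := by rw [hsht]; exact le_max_right _ _
  have htles' : S.ht t ≤ S.ht s' := by rw [hs'ht]; exact le_max_right _ _
  have hss' : s ≠ s' := by
    rintro rfl
    rcases hx with ⟨hxb, hxb'⟩ | ⟨hxb, hxb'⟩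
    · have hxle : S.le x s := S.branch_le hb hxb hsb (by rw [hsht]; exact le_max_left _ _)
      rcases hxle with h | h
      · exact hxb' (hb'.1 x s hs'b h)
      · exact hxb' (h ▸ hs'b)
    · have hxle : S.le x s := S.branch_le hb' hxb hs'b (by rw [hsht]; exact le_max_left _ _)
      rcases hxle with h | h
      · exact hxb' (hb.1 x s hsb h)
      · exact hxb' (h ▸ hsb)
  have h1 : R s' s := by
    rcases hw s hsb htles s' (hb'U hs'b) (by rw [hsht, hs'ht])
      (S.branch_le hb' htb' hs'b htles') with h | h
    · exact absurd h.symm hss'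
    · exact h
  have h2 : R s s' := by
    rcases hw' s' hs'b htles' s (hbU hsb) (by rw [hsht, hs'ht])
      (S.branch_le hb htb hsb htles) with h | h
    · exact absurd h hss'
    · exact h
  exact hasymm _ _ h1 h2

end LexOmega1Tree

/-- If `U` is a downward-closed subtree of height `ω₁` of a lexicographically
ordered `ω₁`-tree `T`, then the set of cofinal branches of `U` that are local end points of
`U` has cardinality at most `ℵ₁`. -/
theorem stmt3 (S : LexOmega1Tree) (U : Set S.T)
    (hdc : ∀ s t : S.T, t ∈ U → S.lt s t → s ∈ U)
    (hht : ∀ α : Ordinal, α < omega1 → ∃ t ∈ U, S.ht t = α) :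
    #{b : Set S.T | S.IsBranch b ∧ b ⊆ U ∧ S.IsLocalEP U b} ≤ Cardinal.aleph 1 := by
  classical
  set A := {b : Set S.T | S.IsBranch b ∧ b ⊆ U ∧ S.IsLocalEP U b} with hA
  have hF : ∃ F : A → S.T × Bool, Function.Injective F := by
    refine ⟨fun b => if h : S.IsLocalRightEP U b.1 then (h.choose, true)
      else ((Or.resolve_left b.2.2.2 h).choose, false), ?_⟩
    intro b b' hbb'
    by_cases h : S.IsLocalRightEP U b.1 <;> by_cases h' : S.IsLocalRightEP U b'.1 <;>
      simp only [h, h', dif_pos, dif_neg, not_false_iff, Prod.mk.injEq] at hbb'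
    · obtain ⟨ht, hw⟩ := h.choose_spec
      obtain ⟨ht', hw'⟩ := h'.choose_spec
      rw [hbb'.1] at ht hw
      exact Subtype.ext (S.ep_unique S.lexlt S.lexlt_asymm b.2.1 b'.2.1 b.2.2.1 b'.2.2.1
        ht ht' hw hw')
    · exact absurd hbb'.2 (by simp)
    · exact absurd hbb'.2 (by simp)
    · obtain ⟨ht, hw⟩ := (Or.resolve_left b.2.2.2 h).choose_spec
      obtain ⟨ht', hw'⟩ := (Or.resolve_left b'.2.2.2 h').choose_spec
      rw [hbb'.1] at ht hw
      exact Subtype.ext (S.ep_unique (fun u s => S.lexlt s u)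
        (fun a c hac hca => S.lexlt_asymm _ _ hca hac) b.2.1 b'.2.1 b.2.2.1 b'.2.2.1
        ht ht' hw hw')
  obtain ⟨F, hFinj⟩ := hF
  calc #A ≤ #(S.T × Bool) := Cardinal.mk_le_of_injective hFinj
    _ = #S.T * #Bool := by rw [Cardinal.mk_prod, Cardinal.lift_id, Cardinal.lift_id]
    _ ≤ Cardinal.aleph 1 * Cardinal.aleph0 := by
        apply mul_le_mul' S.mk_T_le
        simp [Cardinal.mk_bool]
    _ = Cardinal.aleph 1 := by
        rw [Cardinal.mul_eq_max (Cardinal.aleph0_le_aleph 1) le_rfl]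
        simp [Cardinal.aleph0_le_aleph]
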